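/- Let F be a field that is not quadratically closed (some degree-2 polynomial over F does not split). Let n ≥ 1, N ∈ Mat_n(F), and C ∈ F^n (a column vector). Suppose that for every row vector R ∈ Mat_{1,n}(F) and every a ∈ F, the (n+1)×(n+1) block matrix [[a, R],[C, N]] is triangularizable over F. Then C = 0. -/

import Mathlib

/-- A square matrix is triangularizable over the ground field when it is
similar over that field to an upper triangular matrix. -/
def Matrix.Triangularizable {n : ℕ} {F : Type*} [Field F]
    (M : Matrix (Fin n) (Fin n) F) : Prop :=
  ∃ P : (Matrix (Fin n) (Fin n) F)ˣ,
    ((P : Matrix (Fin n) (Fin n) F) * M * ((P⁻¹ : (Matrix (Fin n) (Fin n) F)ˣ) :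
      Matrix (Fin n) (Fin n) F)).BlockTriangular id


open Polynomial Matrix

section Aux

variable {m F : Type*} [Fintype m] [DecidableEq m] [Field F]

lemma charpoly_conj_aux (P : (Matrix m m F)ˣ) (M : Matrix m m F) :
    ((P : Matrix m m F) * M * ((P⁻¹ : (Matrix m m F)ˣ) : Matrix m m F)).charpoly
      = M.charpoly := by
  classical
  set Q : Matrix m m F[X] := (C : F →+* F[X]).mapMatrix (P : Matrix m m F) with hQ
  set Q' : Matrix m m F[X] := (C : F →+* F[X]).mapMatrix ((P⁻¹ : (Matrix m m F)ˣ) : Matrix m m F)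
    with hQ'
  have hQQ' : Q * Q' = 1 := by
    rw [hQ, hQ', ← _root_.map_mul]
    rw [← Units.val_mul, mul_inv_cancel, Units.val_one, _root_.map_one]
  have comm : ∀ (W : Matrix m m F[X]), W * Matrix.scalar m X = Matrix.scalar m X * W := by
    intro W
    ext i j
    simp [Matrix.scalar_apply, Matrix.mul_diagonal, Matrix.diagonal_mul, mul_comm]
  have key : charmatrix ((P : Matrix m m F) * M * ((P⁻¹ : (Matrix m m F)ˣ) : Matrix m m F))
      = Q * charmatrix M * Q' := by
    simp only [charmatrix, _root_.map_mul]
    rw [mul_sub, sub_mul]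
    congr 1
    rw [comm Q, mul_assoc, hQQ', mul_one]
  rw [Matrix.charpoly, Matrix.charpoly, key, det_mul, det_mul]
  have hdet : Q.det * Q'.det = 1 := by rw [← det_mul, hQQ', det_one]
  calc Q.det * (charmatrix M).det * Q'.det
      = Q.det * Q'.det * (charmatrix M).det := by ring
    _ = (charmatrix M).det := by rw [hdet, one_mul]

end Aux

lemma no_eigen_aux {m F K : Type*} [Fintype m] [DecidableEq m] [Field F] [Field K]
    (φ : F →+* K) (θ : K) (hθ : ∀ c : F, θ ≠ φ c)
    (M : Matrix m m F) (hs : M.charpoly.Splits)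
    (w : m → K) (hw : w ≠ 0) (heig : (M.map φ) *ᵥ w = θ • w) : False := by
  have hdet : (θ • (1 : Matrix m m K) - M.map φ).det = 0 := by
    rw [← Matrix.exists_mulVec_eq_zero_iff]
    refine ⟨w, hw, ?_⟩
    rw [Matrix.sub_mulVec, Matrix.smul_mulVec, Matrix.one_mulVec, heig, sub_self]
  have hdet2 : (θ • (1 : Matrix m m K) - M.map φ).det
      = Polynomial.eval θ (M.charpoly.map φ) := by
    rw [← Matrix.charpoly_map M φ, Matrix.charpoly, ← Polynomial.coe_evalRingHom,
      RingHom.map_det]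
    congr 1
    ext i j
    by_cases hij : i = j
    · subst hij; simp [Matrix.charmatrix_apply_eq]
    · simp [Matrix.charmatrix_apply_ne _ _ _ hij, Matrix.one_apply_ne hij,
        Matrix.map_apply]
  have hfact := hs.eq_prod_roots_of_monic M.charpoly_monic
  rw [hdet2, hfact] at hdet
  have hcomp : Polynomial.eval θ
        ((((M.charpoly.roots).map fun a => X - Polynomial.C a).prod).map φ)
      = ((M.charpoly.roots).map fun a => θ - φ a).prod := by
    rw [← Polynomial.coe_evalRingHom, ← Polynomial.coe_mapRingHom, ← RingHom.comp_apply,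
      map_multiset_prod, Multiset.map_map]
    exact congrArg Multiset.prod (Multiset.map_congr rfl fun a _ => by simp)
  rw [hcomp] at hdet
  obtain ⟨a, _, ha⟩ := Multiset.mem_map.mp (Multiset.prod_eq_zero_iff.mp hdet)
  exact hθ a (sub_eq_zero.mp ha)

universe u

lemma exists_quadratic_ext {F : Type u} [Field F]
    (hQC : ∃ q : Polynomial F, q.degree = 2 ∧ ¬ q.Splits) :
    ∃ (K : Type u) (_ : Field K) (φ : F →+* K) (θ : K),
      (∀ c : F, θ ≠ φ c) ∧ (∀ z : K, ∃ a b : F, z = φ a + φ b * θ) := by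
  classical
  obtain ⟨q, hq2, hqns⟩ := hQC
  have hq0 : q ≠ 0 := fun h => by simp [h] at hq2
  have hlc : q.leadingCoeff ≠ 0 := Polynomial.leadingCoeff_ne_zero.mpr hq0
  set p := q * Polynomial.C q.leadingCoeff⁻¹ with hp
  have hpm : p.Monic := Polynomial.monic_mul_leadingCoeff_inv hq0
  have hpd : p.degree = 2 := by
    rw [hp, Polynomial.degree_mul, Polynomial.degree_C (inv_ne_zero hlc), hq2, add_zero]
  have hpnd : p.natDegree = 2 := Polynomial.natDegree_eq_of_degree_eq_some hpd
  have hpns : ¬ p.Splits := by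
    intro hs
    apply hqns
    have hq : q = p * Polynomial.C q.leadingCoeff := by
      rw [hp, mul_assoc, ← Polynomial.C_mul, inv_mul_cancel₀ hlc, Polynomial.C_1, mul_one]
    rw [hq]
    exact hs.mul (Polynomial.Splits.C _)
  have hnoroot : ∀ c : F, ¬ p.IsRoot c := by
    intro c hc
    apply hpns
    obtain ⟨g, hg⟩ := Polynomial.dvd_iff_isRoot.mpr hc
    have hg0 : g ≠ 0 := by
      intro h0
      rw [h0, mul_zero] at hg
      exact hpm.ne_zero hg
    have hdg : g.degree ≤ 1 := by
      have h1 : p.natDegree = (X - Polynomial.C c).natDegree + g.natDegree :=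
        hg ▸ Polynomial.natDegree_mul (Polynomial.X_sub_C_ne_zero c) hg0
      rw [hpnd, Polynomial.natDegree_X_sub_C] at h1
      have : g.natDegree = 1 := by omega
      calc g.degree ≤ (g.natDegree : WithBot ℕ) := Polynomial.degree_le_natDegree
        _ = 1 := by rw [this]; rfl
    rw [hg]
    exact (Polynomial.Splits.X_sub_C _).mul
      (Polynomial.Splits.of_degree_le_one hdg)
  have hirr : Irreducible p := by
    rw [Polynomial.irreducible_iff_roots_eq_zero_of_degree_le_three (by omega) (by omega)]
    by_contra hr
    obtain ⟨a, ha⟩ := Multiset.exists_mem_of_ne_zero hr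
    exact hnoroot a (Polynomial.isRoot_of_mem_roots ha)
  haveI : Fact (Irreducible p) := ⟨hirr⟩
  refine ⟨AdjoinRoot p, inferInstance, AdjoinRoot.of p, AdjoinRoot.root p, ?_, ?_⟩
  · intro c hc
    have h1 := AdjoinRoot.eval₂_root p
    rw [hc, Polynomial.eval₂_at_apply] at h1
    have h2 : p.eval c = 0 := (AdjoinRoot.of p).injective (by rw [h1, map_zero])
    exact hnoroot c h2
  · intro z
    obtain ⟨g, rfl⟩ := AdjoinRoot.mk_surjective z
    refine ⟨(g %ₘ p).coeff 0, (g %ₘ p).coeff 1, ?_⟩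
    have h1 : AdjoinRoot.mk p g = AdjoinRoot.mk p (g %ₘ p) := by
      rw [AdjoinRoot.mk_eq_mk]
      exact ⟨g /ₘ p, by linear_combination (Polynomial.modByMonic_add_div g p).symm⟩
    have hdeg : (g %ₘ p).degree ≤ 1 := by
      by_cases h0 : g %ₘ p = 0
      · rw [h0, Polynomial.degree_zero]; exact bot_le
      · have h3 : (g %ₘ p).natDegree < 2 := by
          have h4 := Polynomial.degree_modByMonic_lt g hpm
          rw [hpd, Polynomial.degree_eq_natDegree h0] at h4
          exact_mod_cast h4
        calc (g %ₘ p).degree ≤ ((g %ₘ p).natDegree : WithBot ℕ) :=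
              Polynomial.degree_le_natDegree
          _ ≤ 1 := by exact_mod_cast Nat.lt_succ_iff.mp h3
    conv_lhs => rw [h1, Polynomial.eq_X_add_C_of_degree_le_one hdeg]
    rw [map_add, _root_.map_mul, AdjoinRoot.mk_X, AdjoinRoot.mk_C, AdjoinRoot.mk_C]
    rw [add_comm]

lemma splits_of_triangularizable {k : ℕ} {F : Type*} [Field F]
    (M : Matrix (Fin k) (Fin k) F) (hM : M.Triangularizable) :
    M.charpoly.Splits := by
  obtain ⟨P, hP⟩ := hM
  have h1 := Matrix.charpoly_of_upperTriangular _ hP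
  rw [charpoly_conj_aux P M] at h1
  rw [h1]
  exact Polynomial.Splits.prod fun i _ => Polynomial.Splits.X_sub_C _

theorem stmt_3 {F : Type*} [Field F]
    (hQC : ∃ q : Polynomial F, q.degree = 2 ∧ ¬ (q.map (RingHom.id F)).Splits)
    {n : ℕ} (hn : 1 ≤ n)
    (N : Matrix (Fin n) (Fin n) F) (C : Fin n → F)
    (h : ∀ (R : Fin n → F) (a : F),
      ((Matrix.fromBlocks
          (Matrix.of fun (_ : Fin 1) (_ : Fin 1) => a)
          (Matrix.of fun (_ : Fin 1) (j : Fin n) => R j)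
          (Matrix.of fun (i : Fin n) (_ : Fin 1) => C i)
          N).reindex finSumFinEquiv finSumFinEquiv).Triangularizable) :
    C = 0 := by
  classical
  obtain ⟨K, instK, φ, θ, hθ, hdec⟩ := exists_quadratic_ext (by simpa only [Polynomial.map_id] using hQC)
  by_contra hC
  obtain ⟨i0, hi0⟩ : ∃ i, C i ≠ 0 := by
    by_contra h'
    push_neg at h'
    exact hC (funext fun i => h' i)
  have hsp : ∀ (R : Fin n → F) (a : F),
      (Matrix.fromBlocks
          (Matrix.of fun (_ : Fin 1) (_ : Fin 1) => a)
          (Matrix.of fun (_ : Fin 1) (j : Fin n) => R j)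
          (Matrix.of fun (i : Fin n) (_ : Fin 1) => C i)
          N).charpoly.Splits := by
    intro R a
    have h1 := splits_of_triangularizable _ (h R a)
    rwa [Matrix.charpoly_reindex] at h1
  have hφinj : Function.Injective φ := φ.injective
  have hindep : ∀ a b : F, φ a + φ b * θ = 0 → a = 0 ∧ b = 0 := by
    intro a b hab
    by_cases hb : b = 0
    · subst hb
      rw [map_zero, zero_mul, add_zero] at hab
      exact ⟨hφinj (by rw [hab, map_zero]), rfl⟩
    · exfalso
      have hφb : φ b ≠ 0 := fun h0 => hb (hφinj (by rw [h0, map_zero]))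
      apply hθ (-a / b)
      rw [map_div₀, map_neg, eq_div_iff hφb]
      linear_combination hab
  -- step A : θ is not an eigenvalue of N over K
  have hNdet : (θ • (1 : Matrix (Fin n) (Fin n) K) - N.map φ).det ≠ 0 := by
    intro h0
    obtain ⟨u, hu, huv⟩ := Matrix.exists_mulVec_eq_zero_iff.mpr h0
    have heigN : (N.map φ) *ᵥ u = θ • u := by
      rw [Matrix.sub_mulVec, Matrix.smul_mulVec, Matrix.one_mulVec, sub_eq_zero] at huv
      exact huv.symm
    set w : Fin 1 ⊕ Fin n → K := Sum.elim 0 u with hwdef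
    have hwne : w ≠ 0 := by
      obtain ⟨j, hj⟩ : ∃ j, u j ≠ 0 := by
        by_contra h'
        push_neg at h'
        exact hu (funext h')
      intro h0'
      exact hj (by simpa [hwdef] using congrFun h0' (Sum.inr j))
    apply no_eigen_aux φ θ hθ _ (hsp 0 0) w hwne
    funext s
    rcases s with k | i
    · simp [hwdef, Matrix.mulVec, dotProduct, Fintype.sum_sum_type]
    · have h2 := congrFun heigN i
      simp only [Matrix.mulVec, dotProduct, Matrix.map_apply, Pi.smul_apply,
        smul_eq_mul] at h2
      simp [hwdef, Matrix.mulVec, dotProduct, Fintype.sum_sum_type, h2]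
  have hA : IsUnit (θ • (1 : Matrix (Fin n) (Fin n) K) - N.map φ).det :=
    isUnit_iff_ne_zero.mpr hNdet
  set A : Matrix (Fin n) (Fin n) K := θ • (1 : Matrix (Fin n) (Fin n) K) - N.map φ with hAdef
  set φC : Fin n → K := fun i => φ (C i) with hφCdef
  set v' : Fin n → K := A⁻¹ *ᵥ φC with hv'def
  have hv : A *ᵥ v' = φC := by
    rw [hv'def, Matrix.mulVec_mulVec, Matrix.mul_nonsing_inv _ hA, Matrix.one_mulVec]
  have hv2 : θ • v' - (N.map φ) *ᵥ v' = φC := by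
    have h1 : (θ • (1 : Matrix (Fin n) (Fin n) K)) *ᵥ v' = θ • v' := by
      rw [Matrix.smul_mulVec, Matrix.one_mulVec]
    rw [← h1, ← Matrix.sub_mulVec, ← hAdef]
    exact hv
  choose α β hαβ using fun i => hdec (v' i)
  by_cases hβ : ∀ i, β i = 0
  · -- then v' has entries in F, forcing v' = 0 and C = 0
    have hvφ : ∀ i, v' i = φ (α i) := by
      intro i
      rw [hαβ i, hβ i, map_zero, zero_mul, add_zero]
    have hα0 : ∀ i, α i = 0 := by
      intro i
      have h1 := congrFun hv2 i
      rw [Pi.sub_apply, Pi.smul_apply, smul_eq_mul] at h1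
      have h2 : ((N.map φ) *ᵥ v') i = φ ((N *ᵥ α) i) := by
        simp only [Matrix.mulVec, dotProduct, Matrix.map_apply, map_sum, _root_.map_mul]
        exact Finset.sum_congr rfl fun j _ => by rw [hvφ j]
      rw [hvφ i, h2] at h1
      have h3 : φ (-(C i + (N *ᵥ α) i)) + φ (α i) * θ = 0 := by
        rw [map_neg, map_add]
        have : φC i = φ (C i) := rfl
        rw [this] at h1
        linear_combination h1
      exact (hindep _ _ h3).2
    have hv0 : v' = 0 := funext fun i => by rw [hvφ i, hα0 i, map_zero]; rfl
    apply hi0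
    apply hφinj
    rw [map_zero]
    have h4 := congrFun hv2 i0
    rw [hv0] at h4
    simpa [hφCdef] using h4.symm
  · push_neg at hβ
    obtain ⟨i1, hb⟩ := hβ
    set R : Fin n → F := Pi.single i1 (β i1)⁻¹ with hRdef
    set a : F := -((β i1)⁻¹ * α i1) with hadef
    set w : Fin 1 ⊕ Fin n → K := Sum.elim (fun _ => 1) v' with hwdef
    have hwne : w ≠ 0 := by
      intro h0
      have := congrFun h0 (Sum.inl 0)
      simp [hwdef] at this
    apply no_eigen_aux φ θ hθ _ (hsp R a) w hwne
    have hbb : φ (β i1)⁻¹ * φ (β i1) = 1 := by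
      rw [← _root_.map_mul, inv_mul_cancel₀ hb, _root_.map_one]
    funext s
    rcases s with k | i
    · -- top row
      simp only [hwdef, Matrix.mulVec, dotProduct, Fintype.sum_sum_type,
        Matrix.map_apply, Matrix.fromBlocks_apply₁₁, Matrix.fromBlocks_apply₁₂,
        Matrix.of_apply, Sum.elim_inl, Sum.elim_inr, Pi.smul_apply, smul_eq_mul,
        Finset.sum_const, Finset.card_univ, Fintype.card_fin, one_smul, mul_one]
      have hsum : (∑ j : Fin n, φ (R j) * v' j) = φ (β i1)⁻¹ * v' i1 := by
        rw [hRdef]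
        rw [Finset.sum_eq_single i1]
        · rw [Pi.single_eq_same]
        · intro j _ hj
          rw [Pi.single_eq_of_ne hj, map_zero, zero_mul]
        · intro hmem
          exact absurd (Finset.mem_univ i1) hmem
      rw [hsum, hαβ i1, hadef, map_neg, _root_.map_mul]
      linear_combination θ * hbb
    · -- bottom rows
      have h1 := congrFun hv2 i
      rw [Pi.sub_apply, Pi.smul_apply, smul_eq_mul] at h1
      simp only [Matrix.mulVec, dotProduct, Matrix.map_apply] at h1
      have : φC i = φ (C i) := rfl
      rw [this] at h1
      simp only [hwdef, Matrix.mulVec, dotProduct, Fintype.sum_sum_type,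
        Matrix.map_apply, Matrix.fromBlocks_apply₂₁, Matrix.fromBlocks_apply₂₂,
        Matrix.of_apply, Sum.elim_inl, Sum.elim_inr, Pi.smul_apply, smul_eq_mul,
        Finset.sum_const, Finset.card_univ, Fintype.card_fin, one_smul, mul_one]
      linear_combination -h1
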